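/- Let A be a self-adjoint operator on a separable complex Hilbert space H with cyclic unit vector φ, and for γ ∈ ℝ let A_γ = A + γ(·,φ)φ with spectral measure μ_γ with respect to φ, and Borel transform F_γ(z) = ∫_ℝ dμ_γ(t)/(t − z), F = F_0. Then for every z ∈ ℂ \ ℝ the Aronszajn–Krein formula holds: F_γ(z) = F(z)/(1 + γ F(z)). -/

import Mathlib

open MeasureTheory Filter Set Complex
open scoped ENNReal Topology InnerProductSpace

variable {H : Type*} [NormedAddCommGroup H] [InnerProductSpace ℂ H] [CompleteSpace H]

/-- The rank-one perturbation `A_γ = A + γ (·,φ)φ` of a (possibly unbounded) operator `A`. -/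
noncomputable def rankOnePert (A : H →ₗ.[ℂ] H) (φ : H) (γ : ℝ) : H →ₗ.[ℂ] H :=
  ⟨A.domain, A.toFun + (γ : ℂ) •
    ((((innerSL ℂ φ).smulRight φ : H →L[ℂ] H) : H →ₗ[ℂ] H).comp A.domain.subtype)⟩

/-- The Borel transform `F(z) = ∫ dμ(t) / (t - z)` of a measure `μ` on `ℝ`. -/
noncomputable def borelTransform (μ : Measure ℝ) (z : ℂ) : ℂ :=
  ∫ t : ℝ, ((t : ℂ) - z)⁻¹ ∂μ

/-- **Aronszajn–Krein formula**: in the rank-one perturbation setting, the Borel transforms of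
the spectral measures `μ_γ` (w.r.t. the cyclic unit vector `φ`) of `A_γ = A + γ(·,φ)φ` satisfy
`F_γ(z) = F(z) / (1 + γ F(z))` for all non-real `z`.  The self-adjoint operators `A_γ` are
encoded through their resolvents `R γ z` and the spectral measures through
`((A_γ - z)⁻¹ φ, φ) = ∫ (t - z)⁻¹ dμ_γ`. -/
theorem aronszajn_krein_formula
    [TopologicalSpace.SeparableSpace H]
    (A : H →ₗ.[ℂ] H) (hA : IsSelfAdjoint A)
    (φ : H) (hφ : ‖φ‖ = 1)
    (R : ℝ → ℂ → H →L[ℂ] H)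
    (hR1 : ∀ (γ : ℝ) (z : ℂ), z.im ≠ 0 → ∀ x : H,
      ∃ h : R γ z x ∈ (rankOnePert A φ γ).domain,
        (rankOnePert A φ γ) ⟨R γ z x, h⟩ - z • R γ z x = x)
    (hR2 : ∀ (γ : ℝ) (z : ℂ), z.im ≠ 0 → ∀ y (hy : y ∈ (rankOnePert A φ γ).domain),
      R γ z ((rankOnePert A φ γ) ⟨y, hy⟩ - z • y) = y)
    (hcyc : (Submodule.span ℂ {x : H | ∃ z : ℂ, z.im ≠ 0 ∧ x = R 0 z φ}).topologicalClosure = ⊤)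
    (μ : ℝ → Measure ℝ) (hfin : ∀ γ, IsFiniteMeasure (μ γ))
    (hμ : ∀ (γ : ℝ) (z : ℂ), z.im ≠ 0 → ⟪φ, R γ z φ⟫_ℂ = borelTransform (μ γ) z)
    (γ : ℝ) :
    ∀ z : ℂ, z.im ≠ 0 →
      borelTransform (μ γ) z = borelTransform (μ 0) z / (1 + γ * borelTransform (μ 0) z) := by
  intro z hz
  obtain ⟨h, eq0⟩ := hR1 0 z hz φ
  set y := R 0 z φ with hy
  set F := borelTransform (μ 0) z with hF
  have hF0 : ⟪φ, y⟫_ℂ = F := hμ 0 z hz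
  have key : (rankOnePert A φ γ) ⟨y, h⟩
      = (rankOnePert A φ 0) ⟨y, h⟩ + (γ : ℂ) • (⟪φ, y⟫_ℂ • φ) := by
    simp [rankOnePert, LinearPMap.mk_apply]
  have eqγ : (rankOnePert A φ γ) ⟨y, h⟩ - z • y = (1 + (γ : ℂ) * F) • φ := by
    have e0 : (rankOnePert A φ 0) ⟨y, h⟩ = φ + z • y := by
      have := eq0
      rw [sub_eq_iff_eq_add] at this
      rw [this]
    rw [key, e0, hF0]
    module
  have hres := hR2 γ z hz y h
  rw [eqγ, _root_.map_smul] at hres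
  have hinner : F = (1 + (γ : ℂ) * F) * borelTransform (μ γ) z := by
    calc F = ⟪φ, y⟫_ℂ := hF0.symm
    _ = ⟪φ, (1 + (γ : ℂ) * F) • R γ z φ⟫_ℂ := by rw [hres]
    _ = (1 + (γ : ℂ) * F) * ⟪φ, R γ z φ⟫_ℂ := inner_smul_right _ _ _
    _ = (1 + (γ : ℂ) * F) * borelTransform (μ γ) z := by rw [hμ γ z hz]
  have hne : (1 + (γ : ℂ) * F) ≠ 0 := by
    intro h0
    have hy0 : y = 0 := by rw [← hres, h0, zero_smul]
    have hsub : (⟨y, h⟩ : (rankOnePert A φ 0).domain) = 0 := by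
      exact Subtype.ext hy0
    have hy0' : R 0 z φ = 0 := hy0
    rw [hsub, hy0'] at eq0
    simp only [map_zero, smul_zero, sub_zero] at eq0
    rw [← eq0] at hφ
    simp at hφ
  rw [eq_div_iff hne]
  linear_combination -hinner
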